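/- Every differentiable function y : ℝ → ℝ satisfying y′(t) = −y(t) − y(t)³ for all t converges to 0 as t → ∞; moreover y(t)² ≤ y(0)² e^{−2t} for all t ≥ 0. (Hence the line y = 0 of the flow ẋ = x(1 + 3y²), ẏ = −y − y³ is attracting: it is a hyperbolic attracting LCS even though it is a trench of the FTLE field, showing that an FTLE trench is not necessarily a parabolic barrier.) -/

import Mathlib

open Filter

/-- Every differentiable solution of `y′ = −y − y³` tends to `0`
as `t → ∞`, and satisfies `y(t)² ≤ y(0)² e^{−2t}` for `t ≥ 0`. -/
theorem decoupled_y_equation_attracting (y : ℝ → ℝ)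
    (hy : ∀ t : ℝ, HasDerivAt y (-(y t) - (y t) ^ 3) t) :
    Tendsto y atTop (nhds 0) ∧
    ∀ t : ℝ, 0 ≤ t → (y t) ^ 2 ≤ (y 0) ^ 2 * Real.exp (-2 * t) := by
  set g : ℝ → ℝ := fun t => (y t) ^ 2 * Real.exp (2 * t) with hg
  have hgderiv : ∀ t : ℝ, HasDerivAt g (-2 * (y t) ^ 4 * Real.exp (2 * t)) t := by
    intro t
    have h1 : HasDerivAt (fun t => (y t) ^ 2) (2 * (y t) * (-(y t) - (y t) ^ 3)) t := by
      simpa using ((hy t).fun_pow 2)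
    have h2 : HasDerivAt (fun t : ℝ => Real.exp (2 * t)) (Real.exp (2 * t) * 2) t := by
      have := (Real.hasDerivAt_exp (2 * t)).comp t ((hasDerivAt_id t).const_mul 2)
      simpa [mul_comm, Function.comp_def] using this
    have := h1.fun_mul h2
    exact this.congr_deriv (by ring)
  have hanti : Antitone g := by
    apply antitone_of_deriv_nonpos
    · exact fun t => (hgderiv t).differentiableAt
    · intro t
      rw [(hgderiv t).deriv]
      have h4 : (0:ℝ) ≤ (y t) ^ 4 := by positivity
      have he : (0:ℝ) < Real.exp (2 * t) := Real.exp_pos _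
      nlinarith
  have hbound : ∀ t : ℝ, 0 ≤ t → (y t) ^ 2 ≤ (y 0) ^ 2 * Real.exp (-2 * t) := by
    intro t ht
    have h : g t ≤ g 0 := hanti ht
    have hg0 : g 0 = (y 0) ^ 2 := by simp [hg]
    rw [hg0] at h
    have hexp : (0:ℝ) < Real.exp (2 * t) := Real.exp_pos _
    have : (y t) ^ 2 ≤ (y 0) ^ 2 / Real.exp (2 * t) := by
      rw [le_div_iff₀ hexp]; exact h
    rwa [neg_mul, Real.exp_neg, ← div_eq_mul_inv]
  refine ⟨?_, hbound⟩
  have hsq : Tendsto (fun t => (y t) ^ 2) atTop (nhds 0) := by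
    have hupper : Tendsto (fun t : ℝ => (y 0) ^ 2 * Real.exp (-2 * t)) atTop (nhds 0) := by
      have : Tendsto (fun t : ℝ => Real.exp (-2 * t)) atTop (nhds 0) := by
        apply Real.tendsto_exp_atBot.comp
        exact (tendsto_id.const_mul_atTop_of_neg (by norm_num))
      simpa using this.const_mul ((y 0) ^ 2)
    refine tendsto_of_tendsto_of_tendsto_of_le_of_le' tendsto_const_nhds hupper ?_ ?_
    · exact Eventually.of_forall fun t => by positivity
    · filter_upwards [eventually_ge_atTop (0:ℝ)] with t ht using hbound t ht
  have habs : Tendsto (fun t => |y t|) atTop (nhds 0) := by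
    have := (Real.continuous_sqrt.continuousAt (x := (0:ℝ))).tendsto.comp hsq
    simpa [Function.comp_def, Real.sqrt_sq_eq_abs] using this
  exact tendsto_zero_iff_abs_tendsto_zero y |>.mpr habs
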